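/- Let A and B be integral domains, J an ideal of B, and f : A → B a non-injective ring homomorphism. Then the following are equivalent: (1) A ⋈^f J is an Hermite ring; (2) A ⋈^f J is a Bézout ring; (3) either J = B and A and B are Bézout rings, or J = 0 and A is a Bézout ring. -/

import Mathlib

/-- A commutative ring is an elementary divisor ring if every square matrix is
equivalent to a diagonal matrix via invertible matrices. -/
def IsElementaryDivisorRing (R : Type*) [CommRing R] : Prop :=
  ∀ (n : ℕ) (M : Matrix (Fin n) (Fin n) R),
    ∃ P Q : Matrix (Fin n) (Fin n) R, IsUnit P ∧ IsUnit Q ∧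
      ∃ d : Fin n → R, P * M * Q = Matrix.diagonal d

/-- A commutative ring is Hermite if any pair `a, b` can be written `a = a₁d`,
`b = b₁d` with `Ra₁ + Rb₁ = R`. -/
def IsHermiteRing (R : Type*) [CommRing R] : Prop :=
  ∀ a b : R, ∃ a₁ b₁ d : R, a = a₁ * d ∧ b = b₁ * d ∧ Ideal.span {a₁, b₁} = ⊤

/-- The amalgamation `A ⋈^f J = {(a, f a + j) | a ∈ A, j ∈ J}` as a subring of `A × B`. -/
def amalgamation {A B : Type*} [CommRing A] [CommRing B] (f : A →+* B) (J : Ideal B) :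
    Subring (A × B) where
  carrier := {p | p.2 - f p.1 ∈ J}
  mul_mem' := by
    intro p q hp hq
    have h : (p * q).2 - f (p * q).1
        = p.2 * (q.2 - f q.1) + f q.1 * (p.2 - f p.1) := by
      simp only [Prod.fst_mul, Prod.snd_mul, map_mul]; ring
    show (p * q).2 - f (p * q).1 ∈ J
    rw [h]
    exact J.add_mem (J.mul_mem_left _ hq) (J.mul_mem_left _ hp)
  one_mem' := by simp
  add_mem' := by
    intro p q hp hq
    have h : (p + q).2 - f (p + q).1 = (p.2 - f p.1) + (q.2 - f q.1) := by
      simp only [Prod.fst_add, Prod.snd_add, map_add]; ring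
    show (p + q).2 - f (p + q).1 ∈ J
    rw [h]
    exact J.add_mem hp hq
  zero_mem' := by simp
  neg_mem' := by
    intro p hp
    have h : (-p).2 - f (-p).1 = -(p.2 - f p.1) := by
      simp only [Prod.fst_neg, Prod.snd_neg, map_neg]; ring
    show (-p).2 - f (-p).1 ∈ J
    rw [h]
    exact J.neg_mem hp

/-- The subring `f(A) + J` of `B`. -/
def rangeAddIdeal {A B : Type*} [CommRing A] [CommRing B] (f : A →+* B) (J : Ideal B) :
    Subring B where
  carrier := {b | ∃ a, b - f a ∈ J}
  mul_mem' := by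
    rintro b b' ⟨a, ha⟩ ⟨a', ha'⟩
    refine ⟨a * a', ?_⟩
    have h : b * b' - f (a * a') = b * (b' - f a') + f a' * (b - f a) := by
      simp only [map_mul]; ring
    show b * b' - f (a * a') ∈ J
    rw [h]
    exact J.add_mem (J.mul_mem_left _ ha') (J.mul_mem_left _ ha)
  one_mem' := ⟨1, by simp⟩
  add_mem' := by
    rintro b b' ⟨a, ha⟩ ⟨a', ha'⟩
    refine ⟨a + a', ?_⟩
    have h : b + b' - f (a + a') = (b - f a) + (b' - f a') := by
      simp only [map_add]; ring
    show b + b' - f (a + a') ∈ J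
    rw [h]
    exact J.add_mem ha ha'
  zero_mem' := ⟨0, by simp⟩
  neg_mem' := by
    rintro b ⟨a, ha⟩
    refine ⟨-a, ?_⟩
    have h : -b - f (-a) = -(b - f a) := by simp only [map_neg]; ring
    show -b - f (-a) ∈ J
    rw [h]
    exact J.neg_mem ha

section Aux

variable {R S : Type*} [CommRing R] [CommRing S]

theorem IsHermiteRing.isBezout (h : IsHermiteRing R) : IsBezout R := by
  rw [IsBezout.iff_span_pair_isPrincipal]
  intro x y
  obtain ⟨a₁, b₁, d, hx, hy, hspan⟩ := h x y
  obtain ⟨u, v, huv⟩ := Ideal.mem_span_pair.mp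
    (hspan ▸ Submodule.mem_top : (1 : R) ∈ Ideal.span {a₁, b₁})
  refine ⟨d, le_antisymm (Ideal.span_le.mpr ?_) ((Ideal.span_singleton_le_iff_mem _).mpr ?_)⟩
  · rintro z (rfl | rfl)
    · exact Ideal.mem_span_singleton'.mpr ⟨a₁, hx.symm⟩
    · exact Ideal.mem_span_singleton'.mpr ⟨b₁, hy.symm⟩
  · refine Ideal.mem_span_pair.mpr ⟨u, v, ?_⟩
    rw [hx, hy]; linear_combination d * huv

theorem isHermiteRing_of_isBezout_domain [IsDomain R] [IsBezout R] : IsHermiteRing R := by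
  intro a b
  obtain ⟨d, hd⟩ := IsBezout.iff_span_pair_isPrincipal.mp ‹IsBezout R› a b
  rw [Ideal.submodule_span_eq] at hd
  by_cases hd0 : d = 0
  · subst hd0
    have ha : a = 0 := by
      have : a ∈ Ideal.span {(0 : R)} := hd ▸ Ideal.subset_span (by simp)
      simpa [Ideal.mem_span_singleton, zero_dvd_iff] using this
    have hb : b = 0 := by
      have : b ∈ Ideal.span {(0 : R)} := hd ▸ Ideal.subset_span (by simp)
      simpa [Ideal.mem_span_singleton, zero_dvd_iff] using this
    exact ⟨1, 1, 0, by simp [ha], by simp [hb],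
      Ideal.eq_top_of_isUnit_mem _ (Ideal.subset_span (by simp)) isUnit_one⟩
  · have ha : a ∈ Ideal.span {d} := hd ▸ Ideal.subset_span (by simp)
    have hb : b ∈ Ideal.span {d} := hd ▸ Ideal.subset_span (by simp)
    obtain ⟨a₁, ha₁⟩ := Ideal.mem_span_singleton'.mp ha
    obtain ⟨b₁, hb₁⟩ := Ideal.mem_span_singleton'.mp hb
    have hdm : d ∈ Ideal.span ({a, b} : Set R) := by
      rw [hd]; exact Ideal.subset_span rfl
    obtain ⟨u, v, huv⟩ := Ideal.mem_span_pair.mp hdm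
    refine ⟨a₁, b₁, d, ha₁.symm, hb₁.symm, ?_⟩
    rw [Ideal.eq_top_iff_one, Ideal.mem_span_pair]
    exact ⟨u, v, mul_right_cancel₀ hd0 (by linear_combination u * ha₁ + v * hb₁ + huv)⟩

theorem IsHermiteRing.of_surjective (g : R →+* S) (hg : Function.Surjective g)
    (h : IsHermiteRing R) : IsHermiteRing S := by
  intro a b
  obtain ⟨a, rfl⟩ := hg a
  obtain ⟨b, rfl⟩ := hg b
  obtain ⟨a₁, b₁, d, ha, hb, hspan⟩ := h a b
  refine ⟨g a₁, g b₁, g d, by rw [ha, map_mul], by rw [hb, map_mul], ?_⟩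
  obtain ⟨u, v, huv⟩ := Ideal.mem_span_pair.mp
    (hspan ▸ Submodule.mem_top : (1 : R) ∈ Ideal.span {a₁, b₁})
  rw [Ideal.eq_top_iff_one, Ideal.mem_span_pair]
  exact ⟨g u, g v, by rw [← map_mul, ← map_mul, ← map_add, huv, map_one]⟩

theorem IsHermiteRing.prod (hR : IsHermiteRing R) (hS : IsHermiteRing S) :
    IsHermiteRing (R × S) := by
  intro a b
  obtain ⟨a₁, b₁, d, ha, hb, hs⟩ := hR a.1 b.1
  obtain ⟨a₂, b₂, e, ha', hb', hs'⟩ := hS a.2 b.2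
  refine ⟨(a₁, a₂), (b₁, b₂), (d, e), Prod.ext ha ha', Prod.ext hb hb', ?_⟩
  obtain ⟨u, v, h1⟩ := Ideal.mem_span_pair.mp
    (hs ▸ Submodule.mem_top : (1 : R) ∈ Ideal.span {a₁, b₁})
  obtain ⟨u', v', h2⟩ := Ideal.mem_span_pair.mp
    (hs' ▸ Submodule.mem_top : (1 : S) ∈ Ideal.span {a₂, b₂})
  rw [Ideal.eq_top_iff_one, Ideal.mem_span_pair]
  exact ⟨(u, u'), (v, v'), Prod.ext h1 h2⟩

end Aux

section Amalg

variable {A B : Type*} [CommRing A] [CommRing B]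

theorem mem_amalgamation {f : A →+* B} {J : Ideal B} {p : A × B} :
    p ∈ amalgamation f J ↔ p.2 - f p.1 ∈ J := Iff.rfl

/-- The isomorphism `A ≃ A ⋈^f 0`. -/
def botEquiv (f : A →+* B) : A ≃+* amalgamation f (⊥ : Ideal B) where
  toFun a := ⟨(a, f a), by simp [mem_amalgamation]⟩
  invFun p := (p : A × B).1
  left_inv a := rfl
  right_inv := by
    rintro ⟨⟨a, b⟩, hab⟩
    have : b = f a := by
      simpa [mem_amalgamation, Ideal.mem_bot, sub_eq_zero] using hab
    subst this; rfl
  map_mul' a b := Subtype.ext (Prod.ext rfl (map_mul f a b))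
  map_add' a b := Subtype.ext (Prod.ext rfl (map_add f a b))

theorem amalgamation_top (f : A →+* B) : amalgamation f (⊤ : Ideal B) = ⊤ := by
  ext p; simp [mem_amalgamation]

/-- The isomorphism `A ⋈^f B ≃ A × B`. -/
def topEquiv (f : A →+* B) : amalgamation f (⊤ : Ideal B) ≃+* A × B :=
  (RingEquiv.subringCongr (amalgamation_top f)).trans Subring.topEquiv

theorem key_dichotomy [IsDomain A] [IsDomain B] (f : A →+* B)
    (hf : ¬ Function.Injective f) (J : Ideal B) (hJ : J ≠ ⊥)
    (h : IsBezout (amalgamation f J)) : J = ⊤ := by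
  obtain ⟨a, hfa, ha0⟩ : ∃ a : A, f a = 0 ∧ a ≠ 0 := by
    by_contra hc
    push_neg at hc
    exact hf ((injective_iff_map_eq_zero f).mpr hc)
  obtain ⟨j, hjJ, hj0⟩ := (Submodule.ne_bot_iff J).mp hJ
  have hx : ((a, 0) : A × B) ∈ amalgamation f J := by simp [mem_amalgamation, hfa]
  have hy : ((0, j) : A × B) ∈ amalgamation f J := by simpa [mem_amalgamation] using hjJ
  set x : amalgamation f J := ⟨(a, 0), hx⟩ with hxdef
  set y : amalgamation f J := ⟨(0, j), hy⟩ with hydef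
  obtain ⟨d, hd⟩ := IsBezout.iff_span_pair_isPrincipal.mp h x y
  rw [Ideal.submodule_span_eq] at hd
  have hxd : x ∈ Ideal.span {d} := hd ▸ Ideal.subset_span (by simp)
  have hyd : y ∈ Ideal.span {d} := hd ▸ Ideal.subset_span (by simp)
  have hdm : d ∈ Ideal.span ({x, y} : Set (amalgamation f J)) := by
    rw [hd]; exact Ideal.subset_span rfl
  obtain ⟨u, hu⟩ := Ideal.mem_span_singleton'.mp hxd
  obtain ⟨v, hv⟩ := Ideal.mem_span_singleton'.mp hyd
  obtain ⟨s, t, hst⟩ := Ideal.mem_span_pair.mp hdm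
  have hu1 : (u : A × B).1 * (d : A × B).1 = a := by
    have := congrArg (fun z : amalgamation f J => (z : A × B).1) hu
    simpa [hxdef] using this
  have hv1 : (v : A × B).1 * (d : A × B).1 = 0 := by
    have := congrArg (fun z : amalgamation f J => (z : A × B).1) hv
    simpa [hydef] using this
  have hv2 : (v : A × B).2 * (d : A × B).2 = j := by
    have := congrArg (fun z : amalgamation f J => (z : A × B).2) hv
    simpa [hydef] using this
  have hst2 : (t : A × B).2 * j = (d : A × B).2 := by
    have := congrArg (fun z : amalgamation f J => (z : A × B).2) hst
    simpa [hxdef, hydef] using this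
  have hd1 : (d : A × B).1 ≠ 0 := by
    intro h0; exact ha0 (by rw [← hu1, h0, mul_zero])
  have hv10 : (v : A × B).1 = 0 := by
    rcases mul_eq_zero.mp hv1 with h' | h'
    · exact h'
    · exact absurd h' hd1
  have hvJ : (v : A × B).2 ∈ J := by
    have := v.2
    rw [mem_amalgamation, hv10, map_zero, sub_zero] at this
    exact this
  have hvt : (v : A × B).2 * (t : A × B).2 = 1 := by
    have hzero : ((v : A × B).2 * (t : A × B).2 - 1) * j = 0 := by
      linear_combination (v : A × B).2 * hst2 + hv2
    rcases mul_eq_zero.mp hzero with h' | h'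
    · exact sub_eq_zero.mp h'
    · exact absurd h' hj0
  exact Ideal.eq_top_of_isUnit_mem _ hvJ (IsUnit.of_mul_eq_one _ hvt)

end Amalg

theorem stmt19 {A B : Type*} [CommRing A] [IsDomain A] [CommRing B] [IsDomain B]
    (f : A →+* B) (hf : ¬ Function.Injective f) (J : Ideal B) :
    (IsHermiteRing (amalgamation f J) ↔ IsBezout (amalgamation f J)) ∧
    (IsBezout (amalgamation f J) ↔
      (J = ⊤ ∧ IsBezout A ∧ IsBezout B) ∨
      (J = ⊥ ∧ IsBezout A)) := by
  have hBez : IsBezout (amalgamation f J) ↔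
      (J = ⊤ ∧ IsBezout A ∧ IsBezout B) ∨ (J = ⊥ ∧ IsBezout A) := by
    constructor
    · intro h
      by_cases hJ : J = ⊥
      · subst hJ
        right
        haveI := h
        exact ⟨rfl, Function.Surjective.isBezout (botEquiv f).symm.toRingHom
          (botEquiv f).symm.surjective⟩
      · left
        have hT := key_dichotomy f hf J hJ h
        subst hT
        haveI := h
        refine ⟨rfl, ?_, ?_⟩
        · exact Function.Surjective.isBezout ((RingHom.fst A B).comp (topEquiv f).toRingHom)
            ((Prod.fst_surjective).comp (topEquiv f).surjective)
        · exact Function.Surjective.isBezout ((RingHom.snd A B).comp (topEquiv f).toRingHom)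
            ((Prod.snd_surjective).comp (topEquiv f).surjective)
    · rintro (⟨rfl, hA, hB⟩ | ⟨rfl, hA⟩)
      · haveI := hA; haveI := hB
        have hprod : IsHermiteRing (A × B) :=
          IsHermiteRing.prod isHermiteRing_of_isBezout_domain isHermiteRing_of_isBezout_domain
        exact (hprod.of_surjective (topEquiv f).symm.toRingHom
          (topEquiv f).symm.surjective).isBezout
      · haveI := hA
        exact Function.Surjective.isBezout (botEquiv f).toRingHom (botEquiv f).surjective
  refine ⟨⟨fun h => h.isBezout, fun h => ?_⟩, hBez⟩
  rcases hBez.mp h with ⟨rfl, hA, hB⟩ | ⟨rfl, hA⟩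
  · haveI := hA; haveI := hB
    have hprod : IsHermiteRing (A × B) :=
      IsHermiteRing.prod isHermiteRing_of_isBezout_domain isHermiteRing_of_isBezout_domain
    exact hprod.of_surjective (topEquiv f).symm.toRingHom (topEquiv f).symm.surjective
  · haveI := hA
    exact (isHermiteRing_of_isBezout_domain (R := A)).of_surjective
      (botEquiv f).toRingHom (botEquiv f).surjective
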